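/- Let a > 0 and γ < 0. Define the 4×4 real symmetric matrices L = −(1/γ)·[[1,1,0,0],[1,1,0,0],[0,0,1,1],[0,0,1,1]] and M₀ = (1/a)·[[0,0,0,0],[0,−1,1,0],[0,1,−1,0],[0,0,0,0]]. Then the eigenvalues of L + M₀ are 0, (−a−γ+√(a²+γ²))/(aγ), −(a+γ+√(a²+γ²))/(aγ), and −2/γ, and exactly two of these eigenvalues are positive, namely −2/γ and −(a+γ+√(a²+γ²))/(aγ). -/

import Mathlib

open Matrix

noncomputable def Lmat (γ : ℝ) : Matrix (Fin 4) (Fin 4) ℝ :=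
  (-(1 / γ)) • !![1, 1, 0, 0; 1, 1, 0, 0; 0, 0, 1, 1; 0, 0, 1, 1]

noncomputable def M0mat (a : ℝ) : Matrix (Fin 4) (Fin 4) ℝ :=
  (1 / a) • !![0, 0, 0, 0; 0, -1, 1, 0; 0, 1, -1, 0; 0, 0, 0, 0]

set_option maxHeartbeats 1000000 in
private lemma det_key (a γ μ : ℝ) (ha : a ≠ 0) (hγ : γ ≠ 0) :
    ((Lmat γ + M0mat a) - μ • (1 : Matrix (Fin 4) (Fin 4) ℝ)).det =
      (0 - μ) * (μ ^ 2 + (2 * (a + γ)) / (a * γ) * μ + 2 / (a * γ)) * ((-(2 / γ)) - μ) := by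
  have hM : (Lmat γ + M0mat a) - μ • (1 : Matrix (Fin 4) (Fin 4) ℝ) =
      !![-1/γ - μ, -1/γ, 0, 0;
         -1/γ, -1/γ - 1/a - μ, 1/a, 0;
         0, 1/a, -1/γ - 1/a - μ, -1/γ;
         0, 0, -1/γ, -1/γ - μ] := by
    ext i j
    fin_cases i <;> fin_cases j <;>
      norm_num [Lmat, M0mat, Matrix.one_apply, Fin.ext_iff, Matrix.vecHead, Matrix.vecTail, Matrix.cons_val_two, Matrix.cons_val_three] <;> ring
  rw [hM]
  simp [Matrix.det_succ_row_zero, Fin.sum_univ_succ, Fin.succAbove, Matrix.vecHead, Matrix.vecTail]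
  field_simp
  ring

private lemma quad_key (a γ μ s : ℝ) (ha : a ≠ 0) (hγ : γ ≠ 0) (hs2 : s ^ 2 = a ^ 2 + γ ^ 2) :
    (((-a - γ + s) / (a * γ)) - μ) * ((-((a + γ + s) / (a * γ))) - μ) =
      μ ^ 2 + (2 * (a + γ)) / (a * γ) * μ + 2 / (a * γ) := by
  field_simp
  linear_combination (-1 : ℝ) * hs2

theorem stmt16 (a γ : ℝ) (ha : 0 < a) (hγ : γ < 0) :
    (∀ μ : ℝ, ((Lmat γ + M0mat a) - μ • (1 : Matrix (Fin 4) (Fin 4) ℝ)).det = 0 ↔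
      (μ = 0 ∨ μ = (-a - γ + Real.sqrt (a ^ 2 + γ ^ 2)) / (a * γ) ∨
       μ = -((a + γ + Real.sqrt (a ^ 2 + γ ^ 2)) / (a * γ)) ∨ μ = -(2 / γ))) ∧
    0 < -(2 / γ) ∧ 0 < -((a + γ + Real.sqrt (a ^ 2 + γ ^ 2)) / (a * γ)) ∧
    (-a - γ + Real.sqrt (a ^ 2 + γ ^ 2)) / (a * γ) ≤ 0 := by
  have ha' : a ≠ 0 := ne_of_gt ha
  have hγ' : γ ≠ 0 := ne_of_lt hγ
  have haγ : a * γ < 0 := mul_neg_of_pos_of_neg ha hγ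
  set s := Real.sqrt (a ^ 2 + γ ^ 2) with hsdef
  have hs2 : s ^ 2 = a ^ 2 + γ ^ 2 := Real.sq_sqrt (by positivity)
  have hspos : 0 < s := Real.sqrt_pos.2 (by positivity)
  have h1 : a + γ < s := by nlinarith [sq_nonneg (s + a + γ)]
  have h2 : -(a + γ) < s := by nlinarith [sq_nonneg (s - a - γ)]
  refine ⟨fun μ => ?_, ?_, ?_, ?_⟩
  · rw [det_key a γ μ ha' hγ', ← quad_key a γ μ s ha' hγ' hs2]
    constructor
    · intro h
      rcases mul_eq_zero.1 h with h | h
      · rcases mul_eq_zero.1 h with h | h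
        · exact Or.inl (by linarith [sub_eq_zero.1 h])
        · rcases mul_eq_zero.1 h with h | h
          · exact Or.inr (Or.inl (sub_eq_zero.1 h).symm)
          · exact Or.inr (Or.inr (Or.inl (sub_eq_zero.1 h).symm))
      · exact Or.inr (Or.inr (Or.inr (sub_eq_zero.1 h).symm))
    · rintro (rfl | rfl | rfl | rfl) <;> ring
  · have : (2 : ℝ) / γ < 0 := div_neg_of_pos_of_neg two_pos hγ
    linarith
  · have hnum : 0 < a + γ + s := by linarith
    have : (a + γ + s) / (a * γ) < 0 := div_neg_of_pos_of_neg hnum haγ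
    linarith
  · have hnum : 0 < -a - γ + s := by linarith
    exact le_of_lt (div_neg_of_pos_of_neg hnum haγ)
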